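/- Let p ≥ q ≥ r be positive integers with gcd(p,q,r)=1, t = gcd(p,q) > 1, q not dividing p, r₁ = p/t, r₂ = q/t. If r > (r₁r₂ − r₁ − r₂ + 4)·r₂·(r₁ + 1 + (r₂−1)/(r₁² + (r₁−1)(r₂−1))), then the maximum size of a subset of {1,...,n} with no solution (x,y,z) to px+qy=rz equals ⌈(t−1)n/t⌉. -/

import Mathlib

open Finset

lemma ceil_div_eq (t n : ℕ) (ht : 1 ≤ t) : ((t-1)*n + t - 1)/t = n - n/t := by
  have h1 : t * (n / t) ≤ n := Nat.mul_div_le n t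
  have h2 : n < t * (n / t) + t := by
    have := Nat.div_add_mod n t
    have := Nat.mod_lt n (show 0 < t by omega)
    omega
  set s := n / t with hs
  have hrw : (t-1)*n + t - 1 = (t-1)*n + (t-1) := by omega
  have key : (n - s) * t ≤ (t-1)*n + t - 1 ∧ (t-1)*n + t - 1 < ((n - s) + 1) * t := by
    have hsn : s ≤ n := Nat.div_le_self n t
    rw [hrw]
    zify [ht, hsn]
    constructor <;> nlinarith
  exact Nat.div_eq_of_lt_le key.1 key.2

lemma rbig (r r₁ r₂ : ℕ) (h1 : 3 ≤ r₁) (h2 : 2 ≤ r₂)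
    (hrbig : ((r₁ : ℚ) * r₂ - r₁ - r₂ + 4) * r₂ *
        ((r₁ : ℚ) + 1 + ((r₂ : ℚ) - 1) / ((r₁ : ℚ) ^ 2 + ((r₁ : ℚ) - 1) * ((r₂ : ℚ) - 1)))
      < (r : ℚ)) : 5 * r₁ * r₂ + 10 < r := by
  set a := (r₁ : ℚ) with hA
  set b := (r₂ : ℚ) with hB
  have ha : (3 : ℚ) ≤ a := by rw [hA]; exact_mod_cast h1
  have hb : (2 : ℚ) ≤ b := by rw [hB]; exact_mod_cast h2
  have hden : (0:ℚ) < a ^ 2 + (a - 1) * (b - 1) := by nlinarith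
  have hfrac : (0:ℚ) ≤ (b - 1) / (a ^ 2 + (a - 1) * (b - 1)) :=
    div_nonneg (by linarith) (le_of_lt hden)
  have hpos : (0:ℚ) ≤ (a * b - a - b + 4) * b := by
    nlinarith [mul_nonneg (by linarith : (0:ℚ) ≤ a-1) (by linarith : (0:ℚ) ≤ b-1)]
  have hstep : (a * b - a - b + 4) * b * (a + 1) ≤
      (a * b - a - b + 4) * b * (a + 1 + (b - 1) / (a ^ 2 + (a - 1) * (b - 1))) := by
    apply mul_le_mul_of_nonneg_left (by linarith) hpos
  have hlow : (5 * r₁ * r₂ + 10 : ℚ) ≤ (a * b - a - b + 4) * b * (a + 1) := by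
    nlinarith [mul_nonneg (sub_nonneg.2 ha) (sub_nonneg.2 hb), ha, hb]
  have key : (5 * r₁ * r₂ + 10 : ℚ) < (r : ℚ) := by
    calc (5 * r₁ * r₂ + 10 : ℚ) ≤ _ := hlow
    _ ≤ _ := hstep
    _ < _ := hrbig
  exact_mod_cast key

theorem stmt6 (p q r t r₁ r₂ : ℕ) (hrq : r ≤ q) (hqp : q ≤ p) (hr : 0 < r)
    (hgcd : Nat.gcd (Nat.gcd p q) r = 1) (ht : t = Nat.gcd p q)
    (hr1 : r₁ = p / t) (hr2 : r₂ = q / t) (hndvd : ¬ q ∣ p) (ht1 : 1 < t)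
    (hrbig : ((r₁ : ℚ) * r₂ - r₁ - r₂ + 4) * r₂ *
        ((r₁ : ℚ) + 1 + ((r₂ : ℚ) - 1) / ((r₁ : ℚ) ^ 2 + ((r₁ : ℚ) - 1) * ((r₂ : ℚ) - 1)))
      < (r : ℚ))
    (n : ℕ) (hn : 1 ≤ n) :
    IsGreatest {m : ℕ | ∃ A : Finset ℕ, A ⊆ Finset.Icc 1 n ∧
      (∀ x ∈ A, ∀ y ∈ A, ∀ z ∈ A, p * x + q * y ≠ r * z) ∧ A.card = m}
      (((t - 1) * n + t - 1) / t) := by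
  have ht0 : 0 < t := by omega
  have htp : t ∣ p := ht ▸ Nat.gcd_dvd_left p q
  have htq : t ∣ q := ht ▸ Nat.gcd_dvd_right p q
  have hp' : p = t * r₁ := by rw [hr1, Nat.mul_div_cancel' htp]
  have hq' : q = t * r₂ := by rw [hr2, Nat.mul_div_cancel' htq]
  have hq0 : 0 < q := lt_of_lt_of_le hr hrq
  have hp0 : 0 < p := lt_of_lt_of_le hq0 hqp
  have hr2pos : 0 < r₂ := by
    rcases Nat.eq_zero_or_pos r₂ with h | h
    · rw [h, mul_zero] at hq'; omega
    · exact h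
  have hr2ge2 : 2 ≤ r₂ := by
    by_contra h
    have h1 : r₂ = 1 := by omega
    have : q = t := by rw [hq', h1, mul_one]
    exact hndvd (this ▸ htp)
  have hcop : Nat.Coprime r₁ r₂ := by
    rw [hr1, hr2, ht]
    exact Nat.coprime_div_gcd_div_gcd (show 0 < Nat.gcd p q by omega)
  have hr1r2 : r₂ ≤ r₁ := by
    have h : t * r₂ ≤ t * r₁ := by rw [← hp', ← hq']; exact hqp
    exact Nat.le_of_mul_le_mul_left h ht0
  have hr1gt : r₂ < r₁ := by
    rcases lt_or_eq_of_le hr1r2 with h | h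
    · exact h
    · exfalso; rw [h] at hcop; rw [Nat.coprime_self] at hcop; omega
  have hr1ge3 : 3 ≤ r₁ := by omega
  have hRB : 5 * r₁ * r₂ + 10 < r := rbig r r₁ r₂ hr1ge3 hr2ge2 hrbig
  have hcoptr : Nat.Coprime t r := by rw [ht]; exact hgcd
  have hrtq : r ≤ t * r₂ := hq' ▸ hrq
  have htlarge : 2 * r₂ ≤ t := by
    have h1 : 5 * r₂ * r₂ ≤ 5 * r₁ * r₂ := by
      apply Nat.mul_le_mul_right; exact Nat.mul_le_mul_left 5 hr1r2
    have h2 : 5 * r₂ * r₂ < t * r₂ := by omega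
    have h3 : 5 * r₂ < t := Nat.lt_of_mul_lt_mul_right h2
    omega
  have target_eq : ((t - 1) * n + t - 1) / t = n - n / t := ceil_div_eq t n (by omega)
  rw [target_eq]
  constructor
  · -- membership: the set of non-multiples of t
    refine ⟨(Finset.Icc 1 n).filter (fun x => ¬ t ∣ x), Finset.filter_subset _ _, ?_, ?_⟩
    · intro x hx y hy z hz heq
      have hz' := (Finset.mem_filter.1 hz).2
      apply hz'
      have hdvd : t ∣ r * z := by
        rw [← heq]; exact Nat.dvd_add (Dvd.dvd.mul_right htp x) (Dvd.dvd.mul_right htq y)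
      exact Nat.Coprime.dvd_of_dvd_mul_left hcoptr hdvd
    · have h1 : ((Finset.Icc 1 n).filter (fun x => t ∣ x)).card = n / t := by
        have he : Finset.Icc 1 n = Finset.Ioc 0 n := rfl
        rw [he]; exact Nat.Ioc_filter_dvd_card_eq_div n t
      have h2 := Finset.card_filter_add_card_filter_not
        (s := Finset.Icc 1 n) (p := fun x => t ∣ x)
      beta_reduce at h2
      have h3 : (Finset.Icc 1 n).card = n := by rw [Nat.card_Icc]; omega
      have h4 : n / t ≤ n := Nat.div_le_self n t
      omega
  · -- upper bound
    rintro mc ⟨A, hA, hfree, rfl⟩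
    by_contra hbig
    push_neg at hbig
    set K := n / t with hKdef
    have hKle : t * K ≤ n := by rw [hKdef]; exact Nat.mul_div_le n t
    have hIccCard : (Finset.Icc 1 n).card = n := by rw [Nat.card_Icc]; omega
    have hAn : A.card ≤ n := hIccCard ▸ Finset.card_le_card hA
    have hKbound : n < t * K + t := by
      rw [hKdef]
      have := Nat.div_add_mod n t
      have := Nat.mod_lt n ht0
      omega
    have hK1 : 1 ≤ K := by
      rcases Nat.lt_or_ge n t with h | h
      · exfalso
        have h0 : n / t = 0 := Nat.div_eq_of_lt h
        rw [hKdef, h0] at hbig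
        omega
      · rw [hKdef]
        exact (Nat.one_le_div_iff ht0).2 h
    -- Missing elements
    set Missing := (Finset.Icc 1 n).filter (fun x => x ∉ A) with hMissDef
    have hMissCard : Missing.card = n - A.card := by
      have h2 := Finset.card_filter_add_card_filter_not
        (s := Finset.Icc 1 n) (p := fun x => x ∈ A)
      beta_reduce at h2
      rw [← hMissDef] at h2
      have h5 : (Finset.Icc 1 n).filter (fun x => x ∈ A) = A := by
        rw [Finset.filter_mem_eq_inter]
        exact Finset.inter_eq_right.2 hA
      rw [h5] at h2
      omega
    have hMissSmall : Missing.card ≤ K - 1 := by omega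
    -- multiples of t in/out of A
    set Mul := (Finset.Icc 1 K).filter (fun j => t * j ∈ A) with hMulDef
    set MulC := (Finset.Icc 1 K).filter (fun j => t * j ∉ A) with hMulCDef
    have hMulSplit : Mul.card + MulC.card = K := by
      have h2 := Finset.card_filter_add_card_filter_not
        (s := Finset.Icc 1 K) (p := fun j => t * j ∈ A)
      beta_reduce at h2
      rw [← hMulDef, ← hMulCDef] at h2
      have h3 : (Finset.Icc 1 K).card = K := by rw [Nat.card_Icc]; omega
      omega
    have hinjt : ∀ x ∈ (Finset.Icc 1 K), ∀ y ∈ (Finset.Icc 1 K),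
        t * x = t * y → x = y := fun x _ y _ h => Nat.eq_of_mul_eq_mul_left ht0 h
    have himg : MulC.image (fun j => t * j) ⊆ Missing := by
      intro x hx
      obtain ⟨j, hj, rfl⟩ := Finset.mem_image.1 hx
      obtain ⟨hjIcc, hjA⟩ := Finset.mem_filter.1 hj
      obtain ⟨hj1, hjK⟩ := Finset.mem_Icc.1 hjIcc
      refine Finset.mem_filter.2 ⟨Finset.mem_Icc.2 ⟨Nat.mul_pos ht0 hj1, ?_⟩, hjA⟩
      calc t * j ≤ t * K := Nat.mul_le_mul_left t hjK
      _ ≤ n := hKle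
    have hMulCimgCard : (MulC.image (fun j => t * j)).card = MulC.card :=
      Finset.card_image_of_injOn (fun x hx y hy h =>
        hinjt x (Finset.mem_filter.1 hx).1 y (Finset.mem_filter.1 hy).1 h)
    have hMulCle : MulC.card ≤ Missing.card := by
      rw [← hMulCimgCard]; exact Finset.card_le_card himg
    have hs1 : 1 ≤ Mul.card := by omega
    have hMulNe : Mul.Nonempty := Finset.card_pos.mp (by omega)
    obtain ⟨m, hmMul, hmax⟩ : ∃ m, m ∈ Mul ∧ ∀ j ∈ Mul, j ≤ m :=
      ⟨Mul.max' hMulNe, Finset.max'_mem _ _, fun j hj => Finset.le_max' _ j hj⟩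
    obtain ⟨hmIcc, hzA⟩ := Finset.mem_filter.1 hmMul
    obtain ⟨hm1, hmK⟩ := Finset.mem_Icc.1 hmIcc
    have htmn : t * m ≤ n := le_trans (Nat.mul_le_mul_left t hmK) hKle
    have hsm : Mul.card ≤ m := by
      have hsub : Mul ⊆ Finset.Icc 1 m := by
        intro j hj
        exact Finset.mem_Icc.2 ⟨(Finset.mem_Icc.1 (Finset.mem_filter.1 hj).1).1, hmax j hj⟩
      calc Mul.card ≤ (Finset.Icc 1 m).card := Finset.card_le_card hsub
      _ = m := by rw [Nat.card_Icc]; omega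
    -- construct base solution (x₀, y₀) to r₁ x + r₂ y = r m
    haveI : NeZero r₂ := ⟨by omega⟩
    obtain ⟨x₀, hx₀1, hx₀le, hmodeq⟩ :
        ∃ x₀, 1 ≤ x₀ ∧ x₀ ≤ r₂ ∧ (r₁ * x₀ : ℕ) ≡ r * m [MOD r₂] := by
      classical
      set c : ZMod r₂ := ((r * m : ℕ) : ZMod r₂) * ((r₁ : ℕ) : ZMod r₂)⁻¹ with hcdef
      refine ⟨if c.val = 0 then r₂ else c.val, by split <;> omega, ?_, ?_⟩
      · have := ZMod.val_lt c
        split <;> omega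
      · have hx₀cast : (((if c.val = 0 then r₂ else c.val) : ℕ) : ZMod r₂) = c := by
          split
          · rename_i h
            rw [ZMod.natCast_self]
            exact ((ZMod.val_eq_zero c).1 h).symm
          · exact (ZMod.natCast_val c).trans (ZMod.cast_id _ _)
        have hkey : ((r₁ : ℕ) : ZMod r₂) * c = (((r * m : ℕ)) : ZMod r₂) := by
          rw [hcdef, ← mul_assoc, mul_comm ((r₁ : ℕ) : ZMod r₂) (((r * m : ℕ)) : ZMod r₂),
            mul_assoc, ZMod.coe_mul_inv_eq_one r₁ hcop, mul_one]
        rw [← ZMod.natCast_eq_natCast_iff, Nat.cast_mul, hx₀cast]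
        exact hkey
    have hx₀r : r₁ * x₀ ≤ r * m := by
      have h1 : r₁ * x₀ ≤ r₁ * r₂ := Nat.mul_le_mul_left r₁ hx₀le
      have h2 : r ≤ r * m := Nat.le_mul_of_pos_right r (by omega)
      linarith
    have hdvd2 : r₂ ∣ (r * m - r₁ * x₀) := (Nat.modEq_iff_dvd' hx₀r).1 hmodeq
    obtain ⟨y₀, hy₀⟩ := hdvd2
    have hy₀eq : r₁ * x₀ + r₂ * y₀ = r * m := by omega
    have hrm : (5 * r₁ * r₂ + 11) * m ≤ r * m := Nat.mul_le_mul_right m (by omega)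
    have hy₀low : 2 * m * r₁ ≤ y₀ := by
      have h1 : r₁ * x₀ ≤ r₁ * r₂ := Nat.mul_le_mul_left r₁ hx₀le
      have hmono : r₁ * r₂ ≤ m * (r₁ * r₂) := Nat.le_mul_of_pos_left (r₁ * r₂) (by omega)
      have h2 : r₂ * (2 * m * r₁) ≤ r₂ * y₀ := by linarith
      exact Nat.le_of_mul_le_mul_left h2 hr2pos
    have hy₀n : y₀ ≤ n := by
      have h1 : r₂ * y₀ ≤ r * m := by omega
      have h2 : r * m ≤ (t * r₂) * m := Nat.mul_le_mul_right m hrtq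
      have h3 : r₂ * y₀ ≤ r₂ * (t * m) := by linarith
      have h4 : y₀ ≤ t * m := Nat.le_of_mul_le_mul_left h3 hr2pos
      omega
    -- the solution set P
    set P := ((Finset.Icc 1 n) ×ˢ (Finset.Icc 1 n)).filter
      (fun pr : ℕ × ℕ => r₁ * pr.1 + r₂ * pr.2 = r * m) with hPdef
    -- lower bound on P.card
    have hPlow : 2 * m - 1 ≤ P.card := by
      have hinj : ∀ k ∈ Finset.range (2 * m - 1), ∀ k' ∈ Finset.range (2 * m - 1),
          (fun k => ((x₀ + k * r₂ : ℕ), (y₀ - k * r₁ : ℕ))) k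
            = (fun k => ((x₀ + k * r₂, y₀ - k * r₁))) k' → k = k' := by
        intro k _ k' _ h
        have h1 : x₀ + k * r₂ = x₀ + k' * r₂ := congrArg Prod.fst h
        have h2 : k * r₂ = k' * r₂ := by omega
        exact Nat.eq_of_mul_eq_mul_right hr2pos h2
      have hmem : ∀ k ∈ Finset.range (2 * m - 1),
          ((x₀ + k * r₂ : ℕ), (y₀ - k * r₁ : ℕ)) ∈ P := by
        intro k hk
        have hk2 : k + 2 ≤ 2 * m := by
          have := Finset.mem_range.1 hk; omega
        have hkr1 : (k + 2) * r₁ ≤ 2 * m * r₁ := Nat.mul_le_mul_right r₁ hk2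
        have hky : k * r₁ + 2 * r₁ ≤ y₀ := by
          calc k * r₁ + 2 * r₁ = (k + 2) * r₁ := by ring
          _ ≤ 2 * m * r₁ := hkr1
          _ ≤ y₀ := hy₀low
        have hxk : x₀ + k * r₂ ≤ n := by
          have hkr2 : (k + 2) * r₂ ≤ 2 * m * r₂ := Nat.mul_le_mul_right r₂ hk2
          have h2m : 2 * m * r₂ = m * (2 * r₂) := by ring
          have h3 : m * (2 * r₂) ≤ m * t := Nat.mul_le_mul_left m htlarge
          have : (k + 2) * r₂ ≤ m * t := by omega
          have h4 : x₀ + k * r₂ + r₂ ≤ (k + 2) * r₂ := by linarith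
          have h5 : m * t = t * m := by ring
          omega
        refine Finset.mem_filter.2 ⟨Finset.mem_product.2 ⟨?_, ?_⟩, ?_⟩
        · exact Finset.mem_Icc.2 ⟨by omega, hxk⟩
        · refine Finset.mem_Icc.2 ⟨?_, ?_⟩
          · have : k * r₁ < y₀ := by omega
            omega
          · have := Nat.sub_le y₀ (k * r₁)
            omega
        · show r₁ * (x₀ + k * r₂) + r₂ * (y₀ - k * r₁) = r * m
          have hky' : k * r₁ ≤ y₀ := by omega
          zify [hky']
          have hz : (r₁ : ℤ) * x₀ + r₂ * y₀ = r * m := by exact_mod_cast hy₀eq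
          linear_combination hz
      have := Finset.card_le_card_of_injOn _ hmem hinj
      rwa [Finset.card_range] at this
    -- upper bound on P.card via missing elements below t*m
    set BadLow := (Finset.Icc 1 n).filter (fun x => x ∉ A ∧ x < t * m) with hBLdef
    -- P splits into pairs with first or second coordinate missing
    have hPsplit : P ⊆ P.filter (fun pr : ℕ × ℕ => pr.1 ∉ A) ∪
        P.filter (fun pr : ℕ × ℕ => pr.2 ∉ A) := by
      intro pr hpr
      obtain ⟨hprod, heq⟩ := Finset.mem_filter.1 hpr
      by_contra hcon
      rw [Finset.mem_union] at hcon
      push_neg at hcon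
      obtain ⟨hc1, hc2⟩ := hcon
      have h1 : pr.1 ∈ A := by
        by_contra h; exact hc1 (Finset.mem_filter.2 ⟨hpr, h⟩)
      have h2 : pr.2 ∈ A := by
        by_contra h; exact hc2 (Finset.mem_filter.2 ⟨hpr, h⟩)
      apply hfree pr.1 h1 pr.2 h2 (t * m) hzA
      rw [hp', hq', mul_assoc, mul_assoc, ← Nat.left_distrib, heq]
      ring
    have hfstlt : ∀ pr : ℕ × ℕ, pr ∈ P → pr.1 < t * m := by
      intro pr hpr
      obtain ⟨hprod, heq⟩ := Finset.mem_filter.1 hpr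
      obtain ⟨hx, hy⟩ := Finset.mem_product.1 hprod
      obtain ⟨hy1, _⟩ := Finset.mem_Icc.1 hy
      by_contra hcon
      push_neg at hcon
      have h1 : r₁ * (t * m) ≤ r₁ * pr.1 := Nat.mul_le_mul_left r₁ hcon
      have h2 : r * m ≤ (t * r₂) * m := Nat.mul_le_mul_right m hrtq
      have h3 : (r₂ + 1) ≤ r₁ := by omega
      have h4 : (r₂ + 1) * (t * m) ≤ r₁ * (t * m) := Nat.mul_le_mul_right _ h3
      have h5 : 1 ≤ t * m := Nat.mul_pos ht0 (by omega)
      have h6 : r₂ ≤ r₂ * pr.2 := Nat.le_mul_of_pos_right r₂ (by omega)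
      linarith
    have hsndlt : ∀ pr : ℕ × ℕ, pr ∈ P → pr.2 < t * m := by
      intro pr hpr
      obtain ⟨hprod, heq⟩ := Finset.mem_filter.1 hpr
      obtain ⟨hx, hy⟩ := Finset.mem_product.1 hprod
      obtain ⟨hx1, _⟩ := Finset.mem_Icc.1 hx
      have h1 : r₁ ≤ r₁ * pr.1 := Nat.le_mul_of_pos_right r₁ (by omega)
      have h2 : r * m ≤ (t * r₂) * m := Nat.mul_le_mul_right m hrtq
      have h3 : r₂ * pr.2 < r₂ * (t * m) := by linarith
      exact Nat.lt_of_mul_lt_mul_left h3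
    have hP1card : (P.filter (fun pr : ℕ × ℕ => pr.1 ∉ A)).card ≤ BadLow.card := by
      apply Finset.card_le_card_of_injOn (fun pr => pr.1)
      · intro pr hpr
        obtain ⟨hpP, hpA⟩ := Finset.mem_filter.1 hpr
        obtain ⟨hprod, heq⟩ := Finset.mem_filter.1 hpP
        obtain ⟨hx, _⟩ := Finset.mem_product.1 hprod
        exact Finset.mem_filter.2 ⟨hx, hpA, hfstlt pr hpP⟩
      · intro pr hpr pr' hpr' h
        obtain ⟨hpP, _⟩ := Finset.mem_filter.1 hpr
        obtain ⟨hpP', _⟩ := Finset.mem_filter.1 hpr'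
        have heq := (Finset.mem_filter.1 hpP).2
        have heq' := (Finset.mem_filter.1 hpP').2
        simp only at h
        have h2 : r₂ * pr.2 = r₂ * pr'.2 := by
          rw [h] at heq
          omega
        have : pr.2 = pr'.2 := Nat.eq_of_mul_eq_mul_left hr2pos h2
        exact Prod.ext h this
    have hP2card : (P.filter (fun pr : ℕ × ℕ => pr.2 ∉ A)).card ≤ BadLow.card := by
      apply Finset.card_le_card_of_injOn (fun pr => pr.2)
      · intro pr hpr
        obtain ⟨hpP, hpA⟩ := Finset.mem_filter.1 hpr
        obtain ⟨hprod, heq⟩ := Finset.mem_filter.1 hpP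
        obtain ⟨_, hy⟩ := Finset.mem_product.1 hprod
        exact Finset.mem_filter.2 ⟨hy, hpA, hsndlt pr hpP⟩
      · intro pr hpr pr' hpr' h
        obtain ⟨hpP, _⟩ := Finset.mem_filter.1 hpr
        obtain ⟨hpP', _⟩ := Finset.mem_filter.1 hpr'
        have heq := (Finset.mem_filter.1 hpP).2
        have heq' := (Finset.mem_filter.1 hpP').2
        simp only at h
        have h2 : r₁ * pr.1 = r₁ * pr'.1 := by
          rw [h] at heq
          omega
        have : pr.1 = pr'.1 := Nat.eq_of_mul_eq_mul_left (by omega) h2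
        exact Prod.ext this h
    have hPup : P.card ≤ 2 * BadLow.card := by
      calc P.card ≤ (P.filter (fun pr : ℕ × ℕ => pr.1 ∉ A) ∪
          P.filter (fun pr : ℕ × ℕ => pr.2 ∉ A)).card := Finset.card_le_card hPsplit
      _ ≤ (P.filter (fun pr : ℕ × ℕ => pr.1 ∉ A)).card +
          (P.filter (fun pr : ℕ × ℕ => pr.2 ∉ A)).card := Finset.card_union_le _ _
      _ ≤ 2 * BadLow.card := by omega
    -- BadLow.card ≤ m - 1
    set BadM := (Finset.Icc 1 n).filter (fun x => (x ∉ A ∧ x < t * m) ∧ t ∣ x) with hBMdef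
    set BadN := (Finset.Icc 1 n).filter (fun x => (x ∉ A ∧ x < t * m) ∧ ¬ t ∣ x) with hBNdef
    have hBLsplit : BadLow.card = BadM.card + BadN.card := by
      have h2 := Finset.card_filter_add_card_filter_not
        (s := BadLow) (p := fun x => t ∣ x)
      beta_reduce at h2
      have e1 : BadLow.filter (fun x => t ∣ x) = BadM := by
        rw [hBLdef, hBMdef, Finset.filter_filter]
      have e2 : BadLow.filter (fun x => ¬ t ∣ x) = BadN := by
        rw [hBLdef, hBNdef, Finset.filter_filter]
      rw [e1, e2] at h2
      omega
    -- BadM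
    have hBadM : BadM.card + Mul.card ≤ m := by
      set T₁ := (Finset.Icc 1 (m-1)).filter (fun j => t * j ∉ A) with hT₁def
      have hmap : BadM.card ≤ T₁.card := by
        apply Finset.card_le_card_of_injOn (fun x => x / t)
        · intro x hx
          obtain ⟨hxIcc, ⟨hxA, hxlt⟩, hxdvd⟩ := Finset.mem_filter.1 hx
          obtain ⟨hx1, hxn⟩ := Finset.mem_Icc.1 hxIcc
          obtain ⟨j, rfl⟩ := hxdvd
          have hj : t * j / t = j := by
            rw [Nat.mul_div_cancel_left j ht0]
          simp only [Finset.mem_coe]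
          rw [hj]
          have hj1 : 1 ≤ j := by
            rcases Nat.eq_zero_or_pos j with h | h
            · rw [h, mul_zero] at hx1; omega
            · exact h
          have hjm : j < m := Nat.lt_of_mul_lt_mul_left hxlt
          exact Finset.mem_filter.2 ⟨Finset.mem_Icc.2 ⟨hj1, by omega⟩, hxA⟩
        · intro x hx y hy h
          obtain ⟨_, _, hxdvd⟩ := Finset.mem_filter.1 hx
          obtain ⟨_, _, hydvd⟩ := Finset.mem_filter.1 hy
          obtain ⟨jx, rfl⟩ := hxdvd
          obtain ⟨jy, rfl⟩ := hydvd
          simp only [Nat.mul_div_cancel_left _ ht0] at h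
          rw [h]
      have hT₁card : T₁.card + (Mul.card - 1) = m - 1 := by
        have h2 := Finset.card_filter_add_card_filter_not
          (s := Finset.Icc 1 (m-1)) (p := fun j => t * j ∈ A)
        beta_reduce at h2
        have e1 : (Finset.Icc 1 (m-1)).filter (fun j => t * j ∈ A) = Mul.erase m := by
          ext j
          simp only [Finset.mem_filter, Finset.mem_Icc, Finset.mem_erase, hMulDef]
          constructor
          · rintro ⟨⟨hj1, hjm⟩, hjA⟩
            exact ⟨by omega, ⟨hj1, by omega⟩, hjA⟩
          · rintro ⟨hjne, ⟨hj1, hjK⟩, hjA⟩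
            have hjm := hmax j (Finset.mem_filter.2 ⟨Finset.mem_Icc.2 ⟨hj1, hjK⟩, hjA⟩)
            exact ⟨⟨hj1, by omega⟩, hjA⟩
        have e2 : (Mul.erase m).card = Mul.card - 1 := Finset.card_erase_of_mem hmMul
        have e3 : (Finset.Icc 1 (m-1)).filter (fun j => t * j ∉ A) = T₁ := rfl
        have h3 : (Finset.Icc 1 (m-1)).card = m - 1 := by rw [Nat.card_Icc]; omega
        rw [e1, e2, e3] at h2
        omega
      omega
    -- BadN
    have hBadN : BadN.card + MulC.card + 1 ≤ K := by
      have hBNsub : BadN ⊆ Missing := by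
        intro x hx
        obtain ⟨hxIcc, ⟨hxA, _⟩, _⟩ := Finset.mem_filter.1 hx
        exact Finset.mem_filter.2 ⟨hxIcc, hxA⟩
      have hdisj : Disjoint BadN (MulC.image (fun j => t * j)) := by
        rw [Finset.disjoint_left]
        intro x hx hx'
        obtain ⟨_, _, hxdvd⟩ := Finset.mem_filter.1 hx
        obtain ⟨j, _, rfl⟩ := Finset.mem_image.1 hx'
        exact hxdvd ⟨j, rfl⟩
      have hunion : BadN ∪ MulC.image (fun j => t * j) ⊆ Missing :=
        Finset.union_subset hBNsub himg
      have hcard := Finset.card_union_of_disjoint hdisj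
      have h1 : (BadN ∪ MulC.image (fun j => t * j)).card ≤ Missing.card :=
        Finset.card_le_card hunion
      omega
    -- conclude
    have hBL : BadLow.card ≤ m - 1 := by omega
    omega
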